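/- In the analytical dual procedure for the single-facility subproblem, the dual value θ at the last capture period of the customer equals zero, and the resulting dual objective equals the primal optimal value ∑ G^{ℓt} x^{ℓt}. -/

import Mathlib

/-- `Dsum d ℓ t = ∑_{ℓ < s ≤ t} d^s`, the demand accumulated between periods `ℓ` and `t`. -/
noncomputable def Dsum (d : ℕ → ℝ) (ℓ t : ℕ) : ℝ := ∑ s ∈ Finset.Icc (ℓ + 1) t, d s

/-- Previous capture period: the largest element of `P` below `t`, or `0`. -/
def prevP (P : Finset ℕ) (t : ℕ) : ℕ := (P.filter (fun s => s < t)).sup id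

/-- `λ^t_i = max_{ℓ ∈ 𝒯^S, ℓ < t} { G^{ℓt}_i − θ^ℓ + θ^t }` (value `0` if `t = 0`). -/
noncomputable def lamG (G : ℕ → ℕ → ℝ) (θ : ℕ → ℝ) (t : ℕ) : ℝ :=
  WithBot.unbotD 0 (((Finset.range t).image (fun ℓ => G ℓ t - θ ℓ + θ t)).max)

lemma prevP_lt {P : Finset ℕ} {t : ℕ} (ht : 0 < t) : prevP P t < t := by
  unfold prevP
  rw [Finset.sup_lt_iff (by exact ht)]
  intro b hb
  simpa using (Finset.mem_filter.mp hb).2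

lemma prevP_erase {P : Finset ℕ} {t m : ℕ} (htm : t < m) :
    prevP P t = prevP (P.erase m) t := by
  unfold prevP
  congr 1
  ext s
  simp only [Finset.mem_filter, Finset.mem_erase]
  constructor
  · rintro ⟨hs, hst⟩
    exact ⟨⟨by omega, hs⟩, hst⟩
  · rintro ⟨⟨_, hs⟩, hst⟩
    exact ⟨hs, hst⟩

lemma tele (f : ℕ → ℝ) : ∀ (P : Finset ℕ) (hne : P.Nonempty),
    ∑ t ∈ P, (f t - f (prevP P t)) = f (P.max' hne) - f 0 := by
  intro P
  induction P using Finset.strongInduction with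
  | _ P ih =>
    intro hne
    have hmP : P.max' hne ∈ P := P.max'_mem hne
    set m := P.max' hne with hm
    have hsum := (Finset.add_sum_erase P (fun t => f t - f (prevP P t)) hmP).symm
    have hfilter : P.filter (fun s => s < m) = P.erase m := by
      ext s
      simp only [Finset.mem_filter, Finset.mem_erase]
      constructor
      · rintro ⟨hs, hsm⟩; exact ⟨ne_of_lt hsm, hs⟩
      · rintro ⟨hsm, hs⟩; exact ⟨hs, lt_of_le_of_ne (P.le_max' s hs) hsm⟩
    by_cases hcase : (P.erase m).Nonempty
    · have hprevm : prevP P m = (P.erase m).max' hcase := by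
        unfold prevP
        rw [hfilter]
        apply le_antisymm
        · exact Finset.sup_le fun b hb => Finset.le_max' _ b hb
        · exact Finset.le_sup (f := id) ((P.erase m).max'_mem hcase)
      have hcong : ∑ t ∈ P.erase m, (f t - f (prevP P t))
          = ∑ t ∈ P.erase m, (f t - f (prevP (P.erase m) t)) := by
        apply Finset.sum_congr rfl
        intro t ht
        have htm : t < m :=
          lt_of_le_of_ne (P.le_max' t (Finset.mem_of_mem_erase ht))
            (Finset.ne_of_mem_erase ht)
        rw [prevP_erase htm]
      rw [hsum, hcong, ih (P.erase m) (Finset.erase_ssubset hmP) hcase, hprevm]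
      ring
    · have hPm : P = {m} := by
        apply Finset.eq_singleton_iff_unique_mem.mpr
        refine ⟨hmP, fun x hx => ?_⟩
        by_contra hne'
        exact hcase ⟨x, Finset.mem_erase.mpr ⟨hne', hx⟩⟩
      have hprevm : prevP P m = 0 := by
        unfold prevP
        rw [hfilter]
        simp [Finset.not_nonempty_iff_eq_empty.mp hcase]
      rw [hsum, Finset.sum_eq_zero (fun x hx => absurd hx (by simp [hPm])), hprevm]
      ring

/-- Analytical optimality-cut procedure for the single-facility subproblem of a fixed
customer: the capture periods form the set `P ⊆ {1,…,T}` (at period `t ∈ P` the open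
acceptable location is `loc t`), the primal transition variables are `x^{st}_i = 1`
exactly for consecutive capture periods, and `G^{ℓt}_i = r_i ∑_{ℓ<s≤t} d^s` for
`t ≤ T` while terminal arcs to `T+1` carry `G^{ℓ(T+1)}_i = 0`.  If `θ` satisfies the
fixed-point equations of Algorithm 2 (computed in decreasing order), then the dual
value at the last capture period is `0`, and the dual objective
`∑_{t ∈ P} λ^t_{loc t} + θ^0` equals the primal optimal value
`∑_{t ∈ P} G^{(prev t) t}_{loc t}` (strong duality via telescoping along the capture
path). -/
theorem stmt_16 {I : Type*} [Fintype I] [Nonempty I]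
    (r : I → ℝ) (hr : ∀ i, 0 ≤ r i) (T : ℕ) (hT : 0 < T)
    (d : ℕ → ℝ) (hd : ∀ s, 0 ≤ d s)
    (P : Finset ℕ) (hP : P ⊆ Finset.Icc 1 T) (hPne : P.Nonempty)
    (loc : ℕ → I)
    (G : ℕ → ℕ → I → ℝ)
    (hG : ∀ ℓ t i, t ≤ T → G ℓ t i = r i * Dsum d ℓ t)
    (hGterm : ∀ ℓ i, G ℓ (T + 1) i = 0)
    (θ : ℕ → ℝ)
    (hθ : ∀ ℓ, ℓ ≤ T → θ ℓ =
      (insert (Finset.univ.sup' Finset.univ_nonempty (fun i => G ℓ (T + 1) i))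
        ((P.filter (fun t => ℓ < t ∧ prevP P t ≠ ℓ)).image
          (fun t => G ℓ t (loc t) - G (prevP P t) t (loc t) + θ (prevP P t)))).max'
        (Finset.insert_nonempty _ _)) :
    θ (P.max' hPne) = 0 ∧
    (∑ t ∈ P, lamG (fun ℓ t => G ℓ t (loc t)) θ t) + θ 0 =
      ∑ t ∈ P, G (prevP P t) t (loc t) := by
  have hsup : ∀ ℓ, (Finset.univ.sup' Finset.univ_nonempty (fun i => G ℓ (T + 1) i)) = 0 := by
    intro ℓ
    have h : (fun i : I => G ℓ (T + 1) i) = fun _ => (0 : ℝ) := funext fun i => hGterm ℓ i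
    rw [h, Finset.sup'_const]
  set m := P.max' hPne with hm
  have hmT : m ≤ T := (Finset.mem_Icc.mp (hP (P.max'_mem hPne))).2
  have hθm : θ m = 0 := by
    have hfe : P.filter (fun t => m < t ∧ prevP P t ≠ m) = ∅ := by
      rw [Finset.filter_eq_empty_iff]
      intro t ht
      push_neg
      intro h
      exact absurd h (not_lt.mpr (P.le_max' t ht))
    rw [hθ m hmT, hfe]
    simp [hsup m]
  refine ⟨hθm, ?_⟩
  have hlam : ∀ t ∈ P, lamG (fun ℓ t => G ℓ t (loc t)) θ t
      = G (prevP P t) t (loc t) - θ (prevP P t) + θ t := by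
    intro t htP
    obtain ⟨ht1, htT⟩ := Finset.mem_Icc.mp (hP htP)
    set p := prevP P t with hp
    have hpt : p < t := prevP_lt (by omega)
    have hmem : (G p t (loc t) - θ p + θ t) ∈
        (Finset.range t).image (fun ℓ => G ℓ t (loc t) - θ ℓ + θ t) :=
      Finset.mem_image_of_mem _ (Finset.mem_range.mpr hpt)
    have hne : ((Finset.range t).image (fun ℓ => G ℓ t (loc t) - θ ℓ + θ t)).Nonempty :=
      ⟨_, hmem⟩
    have hub : ∀ x ∈ (Finset.range t).image (fun ℓ => G ℓ t (loc t) - θ ℓ + θ t),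
        x ≤ G p t (loc t) - θ p + θ t := by
      intro x hx
      obtain ⟨ℓ, hℓ, rfl⟩ := Finset.mem_image.mp hx
      have hℓt : ℓ < t := Finset.mem_range.mp hℓ
      by_cases hcase : ℓ = p
      · subst hcase; exact le_rfl
      · have hℓT : ℓ ≤ T := by omega
        have hmem2 : (G ℓ t (loc t) - G p t (loc t) + θ p) ∈
            (insert (Finset.univ.sup' Finset.univ_nonempty (fun i => G ℓ (T + 1) i))
              ((P.filter (fun s => ℓ < s ∧ prevP P s ≠ ℓ)).image
                (fun s => G ℓ s (loc s) - G (prevP P s) s (loc s) + θ (prevP P s)))) := by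
          apply Finset.mem_insert_of_mem
          exact Finset.mem_image_of_mem _
            (Finset.mem_filter.mpr ⟨htP, hℓt, fun h => hcase h.symm⟩)
        have hge : G ℓ t (loc t) - G p t (loc t) + θ p ≤ θ ℓ := by
          rw [hθ ℓ hℓT]
          exact Finset.le_max' _ _ hmem2
        linarith
    have hmax' : ((Finset.range t).image (fun ℓ => G ℓ t (loc t) - θ ℓ + θ t)).max' hne
        = G p t (loc t) - θ p + θ t :=
      le_antisymm (Finset.max'_le _ _ _ hub) (Finset.le_max' _ _ hmem)
    unfold lamG
    rw [← Finset.coe_max' hne, WithBot.unbotD_coe, hmax']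
  rw [Finset.sum_congr rfl hlam]
  have hsplit : ∑ t ∈ P, (G (prevP P t) t (loc t) - θ (prevP P t) + θ t)
      = ∑ t ∈ P, G (prevP P t) t (loc t) + ∑ t ∈ P, (θ t - θ (prevP P t)) := by
    rw [← Finset.sum_add_distrib]
    exact Finset.sum_congr rfl fun t _ => by ring
  rw [hsplit, tele θ P hPne, ← hm, hθm]
  ring
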